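/- Let λ ∈ ℂ, p = x − λ ∈ ℂ[x], ι a finite index set, d : ι → ℕ with d(j) ≥ 1 for all j, and let V = ⨁_{j ∈ ι} ℂ[x]/(p^{d(j)}) as a ℂ[x]-module (so that the operator T given by multiplication by x has, for eigenvalue λ, Jordan blocks of sizes d(j)). Then a ℂ-subspace W ⊆ V is invariant under every ℂ[x]-module endomorphism of V if and only if there exists c : ι → ℕ with c(j) ≤ d(j) for all j such that: (1) W = ⨁_{j ∈ ι} p^{d(j)−c(j)}·(ℂ[x]/(p^{d(j)})), the direct sum of the submodules of each cyclic summand generated by the class of p^{d(j)−c(j)}; and (2) for all j, j' ∈ ι with d(j) ≤ d(j'), both c(j) ≤ c(j') and d(j) − c(j) ≤ d(j') − c(j'). -/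

import Mathlib

set_option synthInstance.maxHeartbeats 1000000
set_option maxHeartbeats 1000000

open Polynomial DirectSum

section Aux

variable (lam : ℂ)

lemma aux_mk_smul (I : Ideal (Polynomial ℂ)) (r a : Polynomial ℂ) :
    r • Ideal.Quotient.mk I a = Ideal.Quotient.mk I (r * a) := by
  simpa using (Submodule.Quotient.mk_smul I r a).symm

lemma aux_mem_span_mk {d e : ℕ} (he : e ≤ d) (q : Polynomial ℂ) :
    Ideal.Quotient.mk (Ideal.span {(X - C lam) ^ d}) q ∈
      Submodule.span (Polynomial ℂ)
        {Ideal.Quotient.mk (Ideal.span {(X - C lam) ^ d}) ((X - C lam) ^ e)} ↔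
    (X - C lam) ^ e ∣ q := by
  constructor
  · intro h
    obtain ⟨r, hr⟩ := Submodule.mem_span_singleton.mp h
    rw [aux_mk_smul, Ideal.Quotient.mk_eq_mk_iff_sub_mem, Ideal.mem_span_singleton] at hr
    obtain ⟨s, hs⟩ := hr
    have : q = r * (X - C lam) ^ e - (X - C lam) ^ d * s := by linear_combination -hs
    rw [this]
    exact dvd_sub (dvd_mul_left _ r) (Dvd.dvd.mul_right (pow_dvd_pow _ he) s)
  · rintro ⟨t, rfl⟩
    exact Submodule.mem_span_singleton.mpr ⟨t, by rw [aux_mk_smul, mul_comm]⟩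

lemma aux_cyclic_sub (d : ℕ)
    (N : Submodule (Polynomial ℂ) (Polynomial ℂ ⧸ Ideal.span {(X - C lam) ^ d})) :
    ∃ e ≤ d, N = Submodule.span (Polynomial ℂ)
      {Ideal.Quotient.mk (Ideal.span {(X - C lam) ^ d}) ((X - C lam) ^ e)} := by
  set J := N.comap (Submodule.mkQ (Ideal.span {(X - C lam) ^ d} : Submodule (Polynomial ℂ) (Polynomial ℂ))) with hJ
  obtain ⟨g, hg⟩ := (IsPrincipalIdealRing.principal J).principal
  have hmem : (X - C lam) ^ d ∈ J := by
    have hI : ((X - C lam) ^ d) ∈ Ideal.span {(X - C lam) ^ d} := Ideal.subset_span rfl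
    simp only [hJ, Submodule.mem_comap, Submodule.mkQ_apply]
    rw [(Submodule.Quotient.mk_eq_zero _).mpr hI]
    exact N.zero_mem
  have hdvd : g ∣ (X - C lam) ^ d := by
    rw [hg] at hmem; exact Ideal.mem_span_singleton.mp hmem
  obtain ⟨e, he, hassoc⟩ := (dvd_prime_pow (prime_X_sub_C lam) d).mp hdvd
  refine ⟨e, he, ?_⟩
  have h1 : J = Ideal.span {(X - C lam) ^ e} := by
    rw [hg]; exact Ideal.span_singleton_eq_span_singleton.mpr hassoc
  have h2 : N = J.map (Ideal.span {(X - C lam) ^ d}).mkQ :=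
    (Submodule.map_comap_eq_of_surjective (Submodule.mkQ_surjective _) N).symm
  rw [h2, h1]
  rw [show (Ideal.span {(X - C lam) ^ e} : Ideal (Polynomial ℂ)) =
      Submodule.span (Polynomial ℂ) {(X - C lam) ^ e} from rfl,
    Submodule.map_span, Set.image_singleton, Submodule.mkQ_apply]
  rfl

lemma aux_exists_down {a b : ℕ} (h : b ≤ a) :
    ∃ ψ : (Polynomial ℂ ⧸ Ideal.span {(X - C lam) ^ a}) →ₗ[Polynomial ℂ]
        (Polynomial ℂ ⧸ Ideal.span {(X - C lam) ^ b}),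
      ∀ q, ψ (Ideal.Quotient.mk _ q) = Ideal.Quotient.mk _ q := by
  refine ⟨Submodule.mapQ _ _ LinearMap.id ?_, fun q => rfl⟩
  rw [show (Ideal.span {(X - C lam) ^ a} : Ideal (Polynomial ℂ)) =
      Submodule.span (Polynomial ℂ) {(X - C lam) ^ a} from rfl, Submodule.span_le]
  rintro x rfl
  exact Ideal.mem_span_singleton.mpr (pow_dvd_pow _ h)

lemma aux_exists_up {a b : ℕ} (h : a ≤ b) :
    ∃ ψ : (Polynomial ℂ ⧸ Ideal.span {(X - C lam) ^ a}) →ₗ[Polynomial ℂ]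
        (Polynomial ℂ ⧸ Ideal.span {(X - C lam) ^ b}),
      ∀ q, ψ (Ideal.Quotient.mk _ q) = Ideal.Quotient.mk _ ((X - C lam) ^ (b - a) * q) := by
  refine ⟨Submodule.mapQ _ _ (LinearMap.lsmul (Polynomial ℂ) (Polynomial ℂ)
    ((X - C lam) ^ (b - a))) ?_, fun q => rfl⟩
  rw [show (Ideal.span {(X - C lam) ^ a} : Ideal (Polynomial ℂ)) =
      Submodule.span (Polynomial ℂ) {(X - C lam) ^ a} from rfl, Submodule.span_le]
  rintro x rfl
  refine Submodule.mem_comap.mpr (Ideal.mem_span_singleton.mpr ?_)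
  simp only [LinearMap.lsmul_apply, smul_eq_mul]
  rw [← pow_add]
  exact dvd_of_eq (by rw [Nat.sub_add_cancel h])

lemma aux_hom_image {a b e e' : ℕ} (he : e ≤ a) (he' : e' ≤ b)
    (H1 : a ≤ b → e' + a ≤ e + b) (H2 : b ≤ a → e' ≤ e)
    (ψ : (Polynomial ℂ ⧸ Ideal.span {(X - C lam) ^ a}) →ₗ[Polynomial ℂ]
        (Polynomial ℂ ⧸ Ideal.span {(X - C lam) ^ b}))
    (q : Polynomial ℂ) (hq : (X - C lam) ^ e ∣ q) :
    ψ (Ideal.Quotient.mk _ q) ∈ Submodule.span (Polynomial ℂ)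
      {Ideal.Quotient.mk (Ideal.span {(X - C lam) ^ b}) ((X - C lam) ^ e')} := by
  obtain ⟨r, hr⟩ := Ideal.Quotient.mk_surjective (ψ (Ideal.Quotient.mk _ 1))
  have key : (X - C lam) ^ b ∣ (X - C lam) ^ a * r := by
    have : Ideal.Quotient.mk (Ideal.span {(X - C lam) ^ b}) ((X - C lam) ^ a * r) = 0 := by
      rw [← aux_mk_smul, hr, ← map_smul, aux_mk_smul, mul_one]
      rw [show Ideal.Quotient.mk (Ideal.span {(X - C lam) ^ a}) ((X - C lam) ^ a) = 0 from
        Ideal.Quotient.eq_zero_iff_mem.mpr (Ideal.subset_span rfl), map_zero]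
    rw [Ideal.Quotient.eq_zero_iff_mem, Ideal.mem_span_singleton] at this
    exact this
  have hψq : ψ (Ideal.Quotient.mk _ q) = Ideal.Quotient.mk _ (q * r) := by
    calc ψ (Ideal.Quotient.mk _ q) = ψ (q • Ideal.Quotient.mk _ 1) := by rw [aux_mk_smul, mul_one]
      _ = q • ψ (Ideal.Quotient.mk _ 1) := map_smul ψ q _
      _ = q • Ideal.Quotient.mk _ r := by rw [hr]
      _ = Ideal.Quotient.mk _ (q * r) := aux_mk_smul _ q r
  rw [hψq, aux_mem_span_mk lam he']
  rcases le_or_gt a b with hab | hab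
  · have hcancel : (X - C lam) ^ (b - a) ∣ r := by
      have h1 : (X - C lam) ^ a * (X - C lam) ^ (b - a) ∣ (X - C lam) ^ a * r := by
        rw [← pow_add, Nat.add_sub_cancel' hab]; exact key
      exact (mul_dvd_mul_iff_left (pow_ne_zero a (X_sub_C_ne_zero lam))).mp h1
    have hle : (X - C lam) ^ e' ∣ (X - C lam) ^ (e + (b - a)) := pow_dvd_pow _ (by omega)
    refine hle.trans ?_
    rw [pow_add]
    exact mul_dvd_mul hq hcancel
  · exact ((pow_dvd_pow _ (H2 hab.le)).trans hq).mul_right r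

end Aux

/-- For `V = ⨁_j ℂ[x]/(p^{d j})` with `p = x - λ`, a `ℂ`-subspace `W ⊆ V` is invariant under
every `ℂ[x]`-module endomorphism of `V` if and only if there is `c : ι → ℕ`, `c j ≤ d j`,
such that (1) `W` is the direct sum over `j` of the submodules `p^{d j - c j}·(ℂ[x]/(p^{d j}))`
of the cyclic summands, and (2) whenever `d j ≤ d j'` one has `c j ≤ c j'` and
`d j - c j ≤ d j' - c j'`. -/
theorem stmt9 (lam : ℂ) (ι : Type*) [Fintype ι] [DecidableEq ι]
    (d : ι → ℕ) (hd : ∀ j, 1 ≤ d j)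
    (W : Submodule ℂ (⨁ j : ι, Polynomial ℂ ⧸ Ideal.span {(X - C lam) ^ d j})) :
    (∀ φ : (⨁ j : ι, Polynomial ℂ ⧸ Ideal.span {(X - C lam) ^ d j}) →ₗ[Polynomial ℂ]
        (⨁ j : ι, Polynomial ℂ ⧸ Ideal.span {(X - C lam) ^ d j}),
      ∀ w ∈ W, φ w ∈ W) ↔
    ∃ c : ι → ℕ, (∀ j, c j ≤ d j) ∧
      (∀ j j', d j ≤ d j' → c j ≤ c j' ∧ d j - c j ≤ d j' - c j') ∧
      W = ⨆ j : ι, Submodule.map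
        (LinearMap.restrictScalars ℂ
          (DirectSum.lof (Polynomial ℂ) ι
            (fun j => Polynomial ℂ ⧸ Ideal.span {(X - C lam) ^ d j}) j))
        ((Submodule.span (Polynomial ℂ)
          {Ideal.Quotient.mk (Ideal.span {(X - C lam) ^ d j})
            ((X - C lam) ^ (d j - c j))}).restrictScalars ℂ) := by
  constructor
  · intro hφ
    let W' : Submodule (Polynomial ℂ)
        (⨁ j : ι, Polynomial ℂ ⧸ Ideal.span {(X - C lam) ^ d j}) :=
      { carrier := W
        add_mem' := fun hx hy => W.add_mem hx hy
        zero_mem' := W.zero_mem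
        smul_mem' := fun r v hv => by
          exact hφ (r • LinearMap.id) v hv }
    let N : ∀ j, Submodule (Polynomial ℂ) (Polynomial ℂ ⧸ Ideal.span {(X - C lam) ^ d j}) :=
      fun j => W'.comap (DirectSum.lof (Polynomial ℂ) ι (fun i => Polynomial ℂ ⧸ Ideal.span {(X - C lam) ^ d i}) j)
    choose e he hNe using fun j => aux_cyclic_sub lam (d j) (N j)
    have hlofW : ∀ j (v : Polynomial ℂ ⧸ Ideal.span {(X - C lam) ^ d j}),
        v ∈ N j ↔ DirectSum.lof (Polynomial ℂ) ι
          (fun i => Polynomial ℂ ⧸ Ideal.span {(X - C lam) ^ d i}) j v ∈ W :=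
      fun j v => Iff.rfl
    have key1 : ∀ j j', d j ≤ d j' → e j ≤ e j' := by
      intro j j' hjj'
      obtain ⟨ψ, hψ⟩ := aux_exists_down lam hjj'
      have hw0 : DirectSum.lof (Polynomial ℂ) ι (fun i => Polynomial ℂ ⧸ Ideal.span {(X - C lam) ^ d i}) j'
          (Ideal.Quotient.mk _ ((X - C lam) ^ e j')) ∈ W := by
        rw [← hlofW, hNe j']
        exact Submodule.mem_span_singleton_self _
      have h2 := hφ ((DirectSum.lof (Polynomial ℂ) ι (fun i => Polynomial ℂ ⧸ Ideal.span {(X - C lam) ^ d i}) j).comp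
        (ψ.comp (DirectSum.component (Polynomial ℂ) ι (fun i => Polynomial ℂ ⧸ Ideal.span {(X - C lam) ^ d i}) j'))) _ hw0
      simp only [LinearMap.comp_apply, DirectSum.component.lof_self, hψ] at h2
      rw [← hlofW, hNe j, aux_mem_span_mk lam (he j)] at h2
      exact (pow_dvd_pow_iff (X_sub_C_ne_zero lam)
        (prime_X_sub_C lam).not_unit).mp h2
    have key2 : ∀ j j', d j ≤ d j' → e j' ≤ d j' - d j + e j := by
      intro j j' hjj'
      obtain ⟨ψ, hψ⟩ := aux_exists_up lam hjj'
      have hw0 : DirectSum.lof (Polynomial ℂ) ι (fun i => Polynomial ℂ ⧸ Ideal.span {(X - C lam) ^ d i}) j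
          (Ideal.Quotient.mk _ ((X - C lam) ^ e j)) ∈ W := by
        rw [← hlofW, hNe j]
        exact Submodule.mem_span_singleton_self _
      have h2 := hφ ((DirectSum.lof (Polynomial ℂ) ι (fun i => Polynomial ℂ ⧸ Ideal.span {(X - C lam) ^ d i}) j').comp
        (ψ.comp (DirectSum.component (Polynomial ℂ) ι (fun i => Polynomial ℂ ⧸ Ideal.span {(X - C lam) ^ d i}) j))) _ hw0
      simp only [LinearMap.comp_apply, DirectSum.component.lof_self, hψ] at h2
      rw [← hlofW, hNe j', aux_mem_span_mk lam (he j'), ← pow_add] at h2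
      have := (pow_dvd_pow_iff (X_sub_C_ne_zero lam)
        (prime_X_sub_C lam).not_unit).mp h2
      omega
    refine ⟨fun j => d j - e j, fun j => Nat.sub_le _ _, ?_, ?_⟩
    · intro j j' hjj'
      have h1 := key1 j j' hjj'
      have h2 := key2 j j' hjj'
      have h3 := he j
      have h4 := he j'
      show d j - e j ≤ d j' - e j' ∧ d j - (d j - e j) ≤ d j' - (d j' - e j')
      omega
    · have hee : ∀ j, d j - (d j - e j) = e j := fun j => Nat.sub_sub_self (he j)
      simp_rw [hee]
      apply le_antisymm
      · intro w hw
        rw [← DirectSum.sum_univ_of w]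
        apply Submodule.sum_mem
        intro j _
        have h1 : DirectSum.lof (Polynomial ℂ) ι (fun i => Polynomial ℂ ⧸ Ideal.span {(X - C lam) ^ d i}) j
            (DirectSum.component (Polynomial ℂ) ι (fun i => Polynomial ℂ ⧸ Ideal.span {(X - C lam) ^ d i}) j w) ∈ W :=
          hφ ((DirectSum.lof (Polynomial ℂ) ι (fun i => Polynomial ℂ ⧸ Ideal.span {(X - C lam) ^ d i}) j).comp
            (DirectSum.component (Polynomial ℂ) ι (fun i => Polynomial ℂ ⧸ Ideal.span {(X - C lam) ^ d i}) j)) w hw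
        have h2 : DirectSum.component (Polynomial ℂ) ι (fun i => Polynomial ℂ ⧸ Ideal.span {(X - C lam) ^ d i}) j w ∈ N j := (hlofW _ _).mpr h1
        rw [hNe j] at h2
        refine Submodule.mem_iSup_of_mem j (Submodule.mem_map.mpr ⟨w j, h2, rfl⟩)
      · refine iSup_le fun j => ?_
        rintro x ⟨v, hv, rfl⟩
        refine (hlofW j v).mp ?_
        rw [hNe j]
        exact hv
  · rintro ⟨c, hc1, hc2, rfl⟩
    intro φ w hw
    refine Submodule.iSup_induction _ (motive := fun x => φ x ∈ _) hw (fun j x hx => ?_)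
      (by simp) (fun x y hx hy => by simpa only [map_add] using Submodule.add_mem _ hx hy)
    beta_reduce
    obtain ⟨v, hv, rfl⟩ := Submodule.mem_map.mp hx
    obtain ⟨q, rfl⟩ := Ideal.Quotient.mk_surjective v
    have hq : (X - C lam) ^ (d j - c j) ∣ q := by
      rw [← aux_mem_span_mk lam (Nat.sub_le (d j) (c j)) q]
      exact hv
    have heq : (LinearMap.restrictScalars ℂ (DirectSum.lof (Polynomial ℂ) ι
          (fun j => Polynomial ℂ ⧸ Ideal.span {(X - C lam) ^ d j}) j))
        (Ideal.Quotient.mk _ q)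
        = DirectSum.lof (Polynomial ℂ) ι (fun i => Polynomial ℂ ⧸ Ideal.span {(X - C lam) ^ d i}) j (Ideal.Quotient.mk _ q) := rfl
    rw [heq, ← DirectSum.sum_univ_of (φ (DirectSum.lof (Polynomial ℂ) ι (fun i => Polynomial ℂ ⧸ Ideal.span {(X - C lam) ^ d i}) j
      (Ideal.Quotient.mk _ q)))]
    apply Submodule.sum_mem
    intro j' _
    have hval : (φ (DirectSum.lof (Polynomial ℂ) ι (fun i => Polynomial ℂ ⧸ Ideal.span {(X - C lam) ^ d i}) j (Ideal.Quotient.mk _ q))) j'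
        = ((DirectSum.component (Polynomial ℂ) ι (fun i => Polynomial ℂ ⧸ Ideal.span {(X - C lam) ^ d i}) j').comp
          (φ.comp (DirectSum.lof (Polynomial ℂ) ι (fun i => Polynomial ℂ ⧸ Ideal.span {(X - C lam) ^ d i}) j))) (Ideal.Quotient.mk _ q) := rfl
    have hmem := aux_hom_image lam (Nat.sub_le (d j) (c j)) (Nat.sub_le (d j') (c j'))
      (fun h => by have := (hc2 j j' h).1; have := hc1 j; have := hc1 j'; omega)
      (fun h => (hc2 j' j h).2)
      ((DirectSum.component (Polynomial ℂ) ι (fun i => Polynomial ℂ ⧸ Ideal.span {(X - C lam) ^ d i}) j').comp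
        (φ.comp (DirectSum.lof (Polynomial ℂ) ι (fun i => Polynomial ℂ ⧸ Ideal.span {(X - C lam) ^ d i}) j))) q hq
    refine Submodule.mem_iSup_of_mem j' (Submodule.mem_map.mpr ⟨_, hmem, ?_⟩)
    rw [hval]
    rfl
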